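/- Let B = R[b_{i,j} : i ∈ [1,r], j ∈ ℤ]/(b_{i,j}² − σ^{−j}((z−α_i)^{n_i})), where R = k[z] or k[z,z⁻¹]. Then B is not noetherian: writing γ_{i,j} for the value of σ^{−j}((z−α_i)^{n_i}) at z = 1, the ideals I_n = (b_{1,j} + √γ_{1,j} : 0 ≤ j < n) of B/(z−1) form a strictly ascending chain. -/
import Mathlib


/- The commutative ring `B = R[b_{i,j} : i in [1,r], j in Z]/(b_{i,j}^2 - sigma^{-j}((z-a_i)^{n_i}))`
with `R = k[z]`, `sigma(z) = z + 1` (so `sigma^{-j}((z-a_i)^{n_i}) = (z - (a_i + j))^{n_i}`). -/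

open Polynomial

/-- The element `sigma^{-j}((z - a_i)^{n_i}) = (z - (a_i + j))^{n_i}` of `R = k[z]`. -/
noncomputable def Bgen (k : Type) [Field k] {r : ℕ} (α : Fin r → k) (n : Fin r → ℕ)
    (i : Fin r) (j : ℤ) : k[X] :=
  (X - C (α i + (j : k))) ^ n i

/-- The ideal of relations `b_{i,j}^2 = sigma^{-j}((z - a_i)^{n_i})`. -/
noncomputable def Brel (k : Type) [Field k] (r : ℕ) (α : Fin r → k) (n : Fin r → ℕ) :
    Ideal (MvPolynomial (Fin r × ℤ) k[X]) :=
  Ideal.span {p | ∃ (i : Fin r) (j : ℤ),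
    p = MvPolynomial.X (i, j) ^ 2 - MvPolynomial.C (Bgen k α n i j)}

/-- The ring `B`. -/
noncomputable abbrev Bring (k : Type) [Field k] (r : ℕ) (α : Fin r → k) (n : Fin r → ℕ) :
    Type :=
  MvPolynomial (Fin r × ℤ) k[X] ⧸ Brel k r α n

set_option maxHeartbeats 1000000 in
set_option synthInstance.maxHeartbeats 400000 in
/-- The ring `B` is not noetherian: there is a strictly ascending
chain of ideals (in the paper, induced by `I_n = (b_{1,j} + sqrt(γ_{1,j}) : 0 ≤ j < n)` in
`B/(z−1)`). -/
theorem Bring_not_noetherian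
    (k : Type) [Field k] [CharZero k] [IsAlgClosed k] (r : ℕ) (α : Fin r → k) (n : Fin r → ℕ)
    (hr : 0 < r) (hn : ∀ i, 0 < n i)
    (hα : ∀ i j : Fin r, ∀ t : ℤ, α i = α j + (t : k) → i = j) :
    ¬ IsNoetherianRing (Bring k r α n) ∧
      ∃ I : ℕ → Ideal (Bring k r α n), StrictMono I := by
  classical
  set i₀ : Fin r := ⟨0, hr⟩ with hi₀
  obtain ⟨ρ, hρinj, hρ⟩ : ∃ ρ : ℕ → ℤ, Function.Injective ρ ∧
      ∀ m, (1 : k) - (α i₀ + (ρ m : k)) ≠ 0 := by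
    by_cases h : ∃ t : ℤ, (t : k) = 1 - α i₀
    · obtain ⟨t, ht⟩ := h
      refine ⟨fun m => t + 1 + m, fun a b hab => ?_, fun m hm => ?_⟩
      · have h3 : (a : ℤ) = (b : ℤ) := add_left_cancel hab
        exact_mod_cast h3
      · have hm2 : (1 : k) - (α i₀ + ((t + 1 + (m : ℤ) : ℤ) : k)) = 0 := hm
        push_cast at hm2
        have h2 : (((m + 1 : ℕ)) : k) = 0 := by
          push_cast
          linear_combination -hm2 - ht
        exact (Nat.cast_ne_zero.mpr (Nat.succ_ne_zero m)) h2
    · refine ⟨fun m => m, fun a b hab => Nat.cast_injective hab, fun m hm => ?_⟩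
      refine h ⟨m, ?_⟩
      have hm2 : (1 : k) - (α i₀ + (((m : ℤ)) : k)) = 0 := hm
      push_cast at hm2 ⊢
      linear_combination -hm2
  set γv : Fin r × ℤ → k := fun p => ((1 : k) - (α p.1 + (p.2 : k))) ^ n p.1 with hγv
  have hsq : ∀ p : Fin r × ℤ, ∃ s : k, s ^ 2 = γv p := fun p =>
    IsAlgClosed.exists_pow_nat_eq (γv p) (n := 2) (by norm_num)
  choose s hs using hsq
  have hγ : ∀ m, γv (i₀, ρ m) ≠ 0 := fun m => pow_ne_zero _ (hρ m)
  have hsne : ∀ m, s (i₀, ρ m) ≠ 0 := by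
    intro m h
    exact hγ m (by rw [← hs (i₀, ρ m), h]; ring)
  set π : MvPolynomial (Fin r × ℤ) k[X] →+* Bring k r α n :=
    Ideal.Quotient.mk (Brel k r α n) with hπ
  set e : ℕ → Bring k r α n := fun m =>
    π (MvPolynomial.X (i₀, ρ m) + MvPolynomial.C (Polynomial.C (s (i₀, ρ m)))) with he
  set I : ℕ → Ideal (Bring k r α n) := fun N => Ideal.span (e '' Set.Iio N) with hI
  set v : ℕ → Fin r × ℤ → k := fun N p => if p = (i₀, ρ N) then s p else - s p with hv
  have hvsq : ∀ N p, (v N p) ^ 2 = γv p := by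
    intro N p
    have : v N p = s p ∨ v N p = - s p := by
      rw [hv]
      by_cases h : p = (i₀, ρ N) <;> simp [h]
    rcases this with h | h <;> rw [h]
    · exact hs p
    · rw [neg_sq]; exact hs p
  set ψ : ℕ → (MvPolynomial (Fin r × ℤ) k[X] →+* k) := fun N =>
    MvPolynomial.eval₂Hom (Polynomial.evalRingHom (1 : k)) (v N) with hψ
  have hevalBgen : ∀ (i : Fin r) (j : ℤ), Polynomial.eval 1 (Bgen k α n i j) = γv (i, j) := by
    intro i j
    simp [Bgen, hγv]
  have hker : ∀ N, Brel k r α n ≤ RingHom.ker (ψ N) := by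
    intro N
    rw [Brel, Ideal.span_le]
    rintro p ⟨i, j, rfl⟩
    simp only [SetLike.mem_coe, RingHom.mem_ker, map_sub, map_pow, hψ,
      MvPolynomial.eval₂Hom_X', MvPolynomial.eval₂Hom_C, Polynomial.coe_evalRingHom]
    rw [hvsq N (i, j), hevalBgen i j, sub_self]
  set ψ' : ℕ → (Bring k r α n →+* k) := fun N =>
    Ideal.Quotient.lift (Brel k r α n) (ψ N) (fun a ha => hker N ha) with hψ'
  have hψ'π : ∀ N x, ψ' N (π x) = ψ N x := by
    intro N x
    rw [hψ', hπ]
    exact Ideal.Quotient.lift_mk _ _ _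
  have hψe : ∀ N m, ψ' N (e m) = v N (i₀, ρ m) + s (i₀, ρ m) := by
    intro N m
    rw [he]
    simp only []
    rw [hψ'π, hψ]
    simp [MvPolynomial.eval₂Hom_X']
  have hIle : ∀ N, I N ≤ RingHom.ker (ψ' N) := by
    intro N
    rw [hI, Ideal.span_le]
    rintro x ⟨m, hm, rfl⟩
    simp only [Set.mem_Iio] at hm
    have hne : ((i₀, ρ m) : Fin r × ℤ) ≠ (i₀, ρ N) := by
      intro h
      have := hρinj (congrArg Prod.snd h)
      omega
    have hvm : v N (i₀, ρ m) = - s (i₀, ρ m) := by simp [hv, hne]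
    simp only [SetLike.mem_coe, RingHom.mem_ker, hψe, hvm, neg_add_cancel]
  have hnot : ∀ N, e N ∉ I N := by
    intro N hN
    have h0 : ψ' N (e N) = 0 := hIle N hN
    rw [hψe, show v N (i₀, ρ N) = s (i₀, ρ N) by simp [hv]] at h0
    exact hsne N (add_self_eq_zero.mp h0)
  have hmono : StrictMono I := by
    apply strictMono_nat_of_lt_succ
    intro N
    have hle : I N ≤ I (N + 1) :=
      Ideal.span_mono (Set.image_mono (fun x hx => lt_trans hx (Nat.lt_succ_self N)))
    have hmem : e N ∈ I (N + 1) :=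
      Ideal.subset_span ⟨N, Nat.lt_succ_self N, rfl⟩
    exact lt_of_le_of_ne hle (fun h => hnot N (h ▸ hmem))
  refine ⟨?_, I, hmono⟩
  intro h
  obtain ⟨N, hN⟩ := monotone_stabilizes_iff_noetherian.mpr (isNoetherianRing_iff.mp h)
    ⟨I, hmono.monotone⟩
  exact (ne_of_lt (hmono (Nat.lt_succ_self N))) (hN (N + 1) (Nat.le_succ N))
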